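/- Let (w_{ij})_{i,j ∈ ℤ/Nℤ} be a family in A satisfying the untwisted relations, and let v ∈ A be a unitary with v^N = 1 such that v w_{ij} = ω^{j-i} w_{ij} v for all i,j ∈ ℤ/Nℤ. Then the family q_{ij} := v^{-i} w_{ij} satisfies the anyonic permutation relations. -/

import Mathlib

noncomputable section

/-- `ω ^ m` for `m ∈ ℤ/Nℤ`; this is well defined (independent of the chosen
representative) as soon as `ω ^ N = 1`. -/
def wpow (N : ℕ) (ω : ℂ) (m : ZMod N) : ℂ := ω ^ m.val

/-- `z ^ m` for `m ∈ ℤ/Nℤ`; well defined when `z ^ N = 1`. -/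
def apow {A : Type*} [Monoid A] (N : ℕ) (z : A) (m : ZMod N) : A := z ^ m.val

/-- The anyonic permutation relations for a family `(q i j)` indexed by `ℤ/Nℤ × ℤ/Nℤ`. -/
def AnyonicPermRel (N : ℕ) [NeZero N] (ω : ℂ) {A : Type*} [Ring A] [StarRing A]
    [Algebra ℂ A] (q : ZMod N → ZMod N → A) : Prop :=
  (∀ i : ZMod N, q 0 i = if i = 0 then 1 else 0) ∧
  (∀ i : ZMod N, q i 0 = if i = 0 then 1 else 0) ∧
  (∀ i j : ZMod N, star (q i j) = wpow N ω (-(i * (i - j))) • q (-i) (-j)) ∧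
  (∀ i j k : ZMod N, q k (i + j) =
    ∑ l : ZMod N, wpow N ω (-(l * (i - k + l))) • (q (k - l) i * q l j)) ∧
  (∀ i j k : ZMod N, q (i + j) k =
    ∑ l : ZMod N, wpow N ω (-(i * (l - j))) • (q j l * q i (k - l)))

/-- The untwisted relations for a family `(a i j)` indexed by `ℤ/Nℤ × ℤ/Nℤ`. -/
def UntwistedRel (N : ℕ) [NeZero N] {A : Type*} [Ring A] [StarRing A]
    (a : ZMod N → ZMod N → A) : Prop :=
  (∀ i : ZMod N, a i 0 = if i = 0 then 1 else 0) ∧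
  (∀ i j : ZMod N, star (a i j) = a (-i) (-j)) ∧
  (∀ i j k : ZMod N, ∑ l : ZMod N, a (k - l) i * a l j = a k (i + j)) ∧
  (∀ i j k : ZMod N, ∑ l : ZMod N, a j l * a i (k - l) = a (i + j) k)

/-- A matrix `(m i j)` over a unital `*`-algebra is unitary. -/
def IsUnitaryMatrix (N : ℕ) [NeZero N] {A : Type*} [Ring A] [StarRing A]
    (m : ZMod N → ZMod N → A) : Prop :=
  (∀ i j : ZMod N, ∑ k : ZMod N, star (m k i) * m k j = if i = j then 1 else 0) ∧
  (∀ i j : ZMod N, ∑ k : ZMod N, m i k * star (m j k) = if i = j then 1 else 0)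

/-- The twisted conjugate matrix `ū_R` with entries `ω^{-i(j-i)} u_{ij}*`. -/
def conjR (N : ℕ) (ω : ℂ) {A : Type*} [Ring A] [StarRing A] [Algebra ℂ A]
    (u : ZMod N → ZMod N → A) : ZMod N → ZMod N → A :=
  fun i j => wpow N ω (-(i * (j - i))) • star (u i j)

/-- A magic unitary: entries are projections and all rows and columns sum to `1`. -/
def IsMagicUnitary (N : ℕ) [NeZero N] {A : Type*} [Ring A] [StarRing A]
    (u : ZMod N → ZMod N → A) : Prop :=
  (∀ i j : ZMod N, u i j * u i j = u i j) ∧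
  (∀ i j : ZMod N, star (u i j) = u i j) ∧
  (∀ j : ZMod N, ∑ i : ZMod N, u i j = 1) ∧
  (∀ i : ZMod N, ∑ j : ZMod N, u i j = 1)



section helpers
variable {M : Type*} [Monoid M] (N : ℕ) [NeZero N]

omit [NeZero N] in
lemma my_pow_mod (x : M) (hx : x ^ N = 1) (a : ℕ) : x ^ a = x ^ (a % N) := by
  conv_lhs => rw [← Nat.div_add_mod a N]
  rw [pow_add, pow_mul, hx, one_pow, one_mul]

lemma my_apow_natCast (x : M) (hx : x ^ N = 1) (a : ℕ) : apow N x (a : ZMod N) = x ^ a := by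
  rw [apow, ZMod.val_natCast, ← my_pow_mod N x hx]

lemma my_apow_zero (x : M) : apow N x 0 = 1 := by
  simp [apow]

lemma my_apow_add (x : M) (hx : x ^ N = 1) (m n : ZMod N) :
    apow N x (m + n) = apow N x m * apow N x n := by
  have h : m + n = ((m.val + n.val : ℕ) : ZMod N) := by
    push_cast
    simp [ZMod.natCast_val, ZMod.cast_id]
  rw [h, my_apow_natCast N x hx, pow_add]
  rfl

lemma my_apow_natCast_mul (x : M) (hx : x ^ N = 1) (k : ℕ) (m : ZMod N) :
    apow N x ((k : ZMod N) * m) = apow N x m ^ k := by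
  have h : (k : ZMod N) * m = ((k * m.val : ℕ) : ZMod N) := by
    push_cast
    simp [ZMod.natCast_val, ZMod.cast_id]
  rw [h, my_apow_natCast N x hx, pow_mul']
  rfl

lemma my_star_apow [StarMul M] (x : M) (hx : x ^ N = 1) (hsx : star x * x = 1) (m : ZMod N) :
    star (apow N x m) = apow N x (-m) := by
  have h1 : (1 : ℕ) ≤ N := Nat.one_le_iff_ne_zero.mpr (NeZero.ne N)
  have hxs : star x = x ^ (N - 1) := by
    have hxx : x * x ^ (N - 1) = 1 := by
      rw [← pow_succ', Nat.sub_add_cancel h1, hx]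
    calc star x = star x * (x * x ^ (N - 1)) := by rw [hxx, mul_one]
    _ = (star x * x) * x ^ (N - 1) := by rw [mul_assoc]
    _ = x ^ (N - 1) := by rw [hsx, one_mul]
  rw [apow, star_pow, hxs, ← pow_mul, ← my_apow_natCast N x hx ((N - 1) * m.val)]
  congr 1
  push_cast [h1]
  simp [ZMod.natCast_self, ZMod.natCast_val, ZMod.cast_id]

end helpers

theorem stmt_13 (N : ℕ) [NeZero N] (hN : 2 ≤ N) (ω : ℂ) (hω : IsPrimitiveRoot ω N)
    {A : Type*} [NormedRing A] [StarRing A] [CStarRing A]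
    [NormedAlgebra ℂ A] [CompleteSpace A] [StarModule ℂ A]
    (w : ZMod N → ZMod N → A) (hw : UntwistedRel N w)
    (v : A) (hv : star v * v = 1 ∧ v * star v = 1) (hvN : v ^ N = 1)
    (hcomm : ∀ i j : ZMod N, v * w i j = wpow N ω (j - i) • (w i j * v)) :
    AnyonicPermRel N ω (fun i j => apow N v (-i) * w i j) := by
  obtain ⟨hw1, hw2, hw3, hw4⟩ := hw
  have hω1 : ω ^ N = 1 := hω.pow_eq_one
  have hωstar : star ω * ω = 1 := by
    have hn : ‖ω‖ = 1 := Complex.norm_eq_one_of_pow_eq_one hω1 (NeZero.ne N)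
    rw [Complex.star_def, ← Complex.normSq_eq_conj_mul_self]
    rw [Complex.normSq_eq_norm_sq, hn]
    norm_num
  have hc_add : ∀ m n : ZMod N, wpow N ω (m + n) = wpow N ω m * wpow N ω n := fun m n =>
    my_apow_add N ω hω1 m n
  have hc_zero : wpow N ω 0 = 1 := my_apow_zero N ω
  have hc_cancel : ∀ m : ZMod N, wpow N ω (-m) * wpow N ω m = 1 := fun m => by
    rw [← hc_add, neg_add_cancel, hc_zero]
  have hP_add : ∀ m n : ZMod N, apow N v (m + n) = apow N v m * apow N v n := fun m n =>
    my_apow_add N v hvN m n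
  have hP_zero : apow N v 0 = 1 := my_apow_zero N v
  have hcomm_pow : ∀ (n : ℕ) (i j : ZMod N),
      v ^ n * w i j = wpow N ω (j - i) ^ n • (w i j * v ^ n) := by
    intro n
    induction n with
    | zero => intro i j; simp
    | succ n ih =>
      intro i j
      rw [pow_succ, mul_assoc, hcomm i j, mul_smul_comm, ← mul_assoc, ih i j,
        smul_mul_assoc, smul_smul, mul_assoc, ← pow_succ, ← pow_succ']
  have hPcomm : ∀ (m i j : ZMod N),
      apow N v m * w i j = wpow N ω (m * (j - i)) • (w i j * apow N v m) := by
    intro m i j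
    have h1 : wpow N ω (m * (j - i)) = wpow N ω (j - i) ^ m.val := by
      rw [show m * (j - i) = ((m.val : ℕ) : ZMod N) * (j - i) by
        simp [ZMod.natCast_val, ZMod.cast_id]]
      exact my_apow_natCast_mul N ω hω1 m.val (j - i)
    rw [h1]
    exact hcomm_pow m.val i j
  have hPcomm' : ∀ (m i j : ZMod N),
      w i j * apow N v m = wpow N ω (-(m * (j - i))) • (apow N v m * w i j) := by
    intro m i j
    rw [hPcomm m i j, smul_smul, hc_cancel, one_smul]
  have hPstar : ∀ m : ZMod N, star (apow N v m) = apow N v (-m) := fun m =>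
    my_star_apow N v hvN hv.1 m
  have h00 : w 0 0 = 1 := by simpa using hw1 0
  have hrow : ∑ l : ZMod N, w 0 l * star (w 0 l) = 1 := by
    have h := hw4 0 0 0
    simp only [add_zero, zero_add] at h
    rw [← h00, ← h]
    refine Finset.sum_congr rfl fun l _ => ?_
    rw [hw2 0 l, neg_zero, zero_sub]
  have he : ∀ i : ZMod N, w 0 i = if i = 0 then 1 else 0 := by
    intro i
    by_cases hi : i = 0
    · simp [hi, h00]
    · simp only [hi, if_false]
      letI : CStarAlgebra A :=
        { ‹NormedRing A›, ‹StarRing A›, ‹CompleteSpace A›, ‹CStarRing A›,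
          ‹NormedAlgebra ℂ A›, ‹StarModule ℂ A› with }
      letI := CStarAlgebra.spectralOrder A
      haveI := CStarAlgebra.spectralOrderedRing A
      have hsplit : w 0 0 * star (w 0 0) +
          ∑ l ∈ Finset.univ.erase (0 : ZMod N), w 0 l * star (w 0 l) = 1 := by
        exact (Finset.add_sum_erase Finset.univ
          (fun l : ZMod N => w 0 l * star (w 0 l)) (Finset.mem_univ (0 : ZMod N))).trans hrow
      rw [h00, star_one, mul_one] at hsplit
      have hzero : ∑ l ∈ Finset.univ.erase (0 : ZMod N), w 0 l * star (w 0 l) = 0 :=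
        add_eq_left.mp hsplit
      have hterm := (Finset.sum_eq_zero_iff_of_nonneg
        (fun l _ => mul_star_self_nonneg (w 0 l))).mp hzero i
        (Finset.mem_erase.mpr ⟨hi, Finset.mem_univ i⟩)
      exact (CStarRing.mul_star_self_eq_zero_iff (w 0 i)).mp hterm
  refine ⟨?_, ?_, ?_, ?_, ?_⟩
  · intro i
    dsimp only
    rw [neg_zero, hP_zero, one_mul]
    exact he i
  · intro i
    dsimp only
    rw [hw1 i]
    by_cases hi : i = 0
    · simp [hi, neg_zero, hP_zero]
    · simp [hi]
  · intro i j
    dsimp only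
    rw [star_mul, hw2 i j, hPstar, neg_neg, hPcomm' i (-i) (-j),
      show -(i * (-j - -i)) = -(i * (i - j)) from by ring]
  · intro i j k
    dsimp only
    have key : ∀ l : ZMod N, wpow N ω (-(l * (i - k + l))) •
        ((apow N v (-(k - l)) * w (k - l) i) * (apow N v (-l) * w l j)) =
        apow N v (-k) * (w (k - l) i * w l j) := by
      intro l
      rw [show (-k : ZMod N) = -(k - l) + -l from by ring, hP_add, mul_assoc,
        mul_assoc (apow N v (-(k - l))), ← mul_assoc (w (k - l) i) (apow N v (-l)),
        hPcomm' (-l) (k - l) i,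
        show -(-l * (i - (k - l))) = l * (i - k + l) from by ring]
      simp only [smul_mul_assoc, mul_smul_comm, smul_smul]
      rw [hc_cancel, one_smul, mul_assoc]
    rw [← hw3 i j k, Finset.mul_sum]
    exact Finset.sum_congr rfl fun l _ => (key l).symm
  · intro i j k
    dsimp only
    have key : ∀ l : ZMod N, wpow N ω (-(i * (l - j))) •
        ((apow N v (-j) * w j l) * (apow N v (-i) * w i (k - l))) =
        apow N v (-(i + j)) * (w j l * w i (k - l)) := by
      intro l
      rw [show (-(i + j) : ZMod N) = -j + -i from by ring, hP_add, mul_assoc,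
        mul_assoc (apow N v (-j)), ← mul_assoc (w j l) (apow N v (-i)),
        hPcomm' (-i) j l,
        show -(-i * (l - j)) = i * (l - j) from by ring]
      simp only [smul_mul_assoc, mul_smul_comm, smul_smul]
      rw [hc_cancel, one_smul, mul_assoc]
    rw [← hw4 i j k, Finset.mul_sum]
    exact Finset.sum_congr rfl fun l _ => (key l).symm
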